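/- In the Hopf algebroid A = C²(ι×ῑ,ι×ῑ) of a D2 Frobenius 1-morphism ι, with i_A = coev_L ∘ ev_R: (i) (a∘i_A) ∗ 1_A = s_L(π_L(a)); (ii) 1_A ∗ (a∘i_A) = t_L(π_L(a)); (iii) 1_A ∗ (i_A∘a) = s_R(π_R(a)); (iv) (i_A∘a) ∗ 1_A = t_R(π_R(a)), for all a ∈ A. -/
import Mathlib


open CategoryTheory Bicategory

universe w v u

variable {C : Type u} [Bicategory.{w, v} C] {a b : C}

/-- Duality data exhibiting `κ` as a two-sided dual of `ι`: `(evL, coevL)` exhibit a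
left-dual pair and `(evR, coevR)` a right-dual pair, all four snake identities holding. -/
structure FrobeniusDuality (ι : a ⟶ b) (κ : b ⟶ a) where
  evL : κ ≫ ι ⟶ 𝟙 b
  coevL : 𝟙 a ⟶ ι ≫ κ
  evR : ι ≫ κ ⟶ 𝟙 a
  coevR : 𝟙 b ⟶ κ ≫ ι
  zig1 : (λ_ ι).inv ≫ coevL ▷ ι ≫ (α_ ι κ ι).hom ≫ ι ◁ evL ≫ (ρ_ ι).hom = 𝟙 ι
  zig2 : (ρ_ κ).inv ≫ κ ◁ coevL ≫ (α_ κ ι κ).inv ≫ evL ▷ κ ≫ (λ_ κ).hom = 𝟙 κ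
  zig3 : (ρ_ ι).inv ≫ ι ◁ coevR ≫ (α_ ι κ ι).inv ≫ evR ▷ ι ≫ (λ_ ι).hom = 𝟙 ι
  zig4 : (λ_ κ).inv ≫ coevR ▷ κ ≫ (α_ κ ι κ).hom ≫ κ ◁ evR ≫ (ρ_ κ).hom = 𝟙 κ

namespace FrobeniusDuality

variable {ι : a ⟶ b} {κ : b ⟶ a} (D : FrobeniusDuality ι κ)

/-- The Fourier transformation `F`, bending the legs of a 2-endomorphism of `ι ≫ κ`
using `coevR` and `evL`. -/
def Ftr (x : ι ≫ κ ⟶ ι ≫ κ) : κ ≫ ι ⟶ κ ≫ ι :=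
  (λ_ (κ ≫ ι)).inv ≫ D.coevR ▷ (κ ≫ ι) ≫ (α_ κ ι (κ ≫ ι)).hom ≫
    κ ◁ ((α_ ι κ ι).inv ≫ x ▷ ι ≫ (α_ ι κ ι).hom) ≫
    (α_ κ ι (κ ≫ ι)).inv ≫ (κ ≫ ι) ◁ D.evL ≫ (ρ_ (κ ≫ ι)).hom

/-- The inverse Fourier transformation, bending legs using `coevL` and `evR`. -/
def FtrInv (y : κ ≫ ι ⟶ κ ≫ ι) : ι ≫ κ ⟶ ι ≫ κ :=
  (ρ_ (ι ≫ κ)).inv ≫ (ι ≫ κ) ◁ D.coevL ≫ (α_ ι κ (ι ≫ κ)).hom ≫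
    ι ◁ ((α_ κ ι κ).inv ≫ y ▷ κ ≫ (α_ κ ι κ).hom) ≫
    (α_ ι κ (ι ≫ κ)).inv ≫ D.evR ▷ (ι ≫ κ) ≫ (λ_ (ι ≫ κ)).hom

/-- The second Fourier transformation `Ḟ`, with `coevR` and `evL` attached on the other sides. -/
def Fdot (x : ι ≫ κ ⟶ ι ≫ κ) : κ ≫ ι ⟶ κ ≫ ι :=
  (ρ_ (κ ≫ ι)).inv ≫ (κ ≫ ι) ◁ D.coevR ≫ (α_ κ ι (κ ≫ ι)).hom ≫
    κ ◁ ((α_ ι κ ι).inv ≫ x ▷ ι ≫ (α_ ι κ ι).hom) ≫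
    (α_ κ ι (κ ≫ ι)).inv ≫ D.evL ▷ (κ ≫ ι) ≫ (λ_ (κ ≫ ι)).hom

/-- The inverse of the second Fourier transformation. -/
def FdotInv (y : κ ≫ ι ⟶ κ ≫ ι) : ι ≫ κ ⟶ ι ≫ κ :=
  (λ_ (ι ≫ κ)).inv ≫ D.coevL ▷ (ι ≫ κ) ≫ (α_ ι κ (ι ≫ κ)).hom ≫
    ι ◁ ((α_ κ ι κ).inv ≫ y ▷ κ ≫ (α_ κ ι κ).hom) ≫
    (α_ ι κ (ι ≫ κ)).inv ≫ (ι ≫ κ) ◁ D.evR ≫ (ρ_ (ι ≫ κ)).hom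

/-- The convolution product on `C²(ι×κ, ι×κ)`, contracting the middle legs with
`coevR` and `evL`.  (Vertical composition in the paper is `x ∘ y = y ≫ x`.) -/
def conv (x y : ι ≫ κ ⟶ ι ≫ κ) : ι ≫ κ ⟶ ι ≫ κ :=
  ι ◁ (λ_ κ).inv ≫ ι ◁ (D.coevR ▷ κ) ≫ ι ◁ (α_ κ ι κ).hom ≫
    (α_ ι κ (ι ≫ κ)).inv ≫ x ▷ (ι ≫ κ) ≫ (ι ≫ κ) ◁ y ≫
    (α_ ι κ (ι ≫ κ)).hom ≫ ι ◁ (α_ κ ι κ).inv ≫ ι ◁ (D.evL ▷ κ) ≫ ι ◁ (λ_ κ).hom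

/-- The convolution product on `C²(κ×ι, κ×ι)`, contracting the middle legs with
`coevL` and `evR`. -/
def convB (x y : κ ≫ ι ⟶ κ ≫ ι) : κ ≫ ι ⟶ κ ≫ ι :=
  κ ◁ (λ_ ι).inv ≫ κ ◁ (D.coevL ▷ ι) ≫ κ ◁ (α_ ι κ ι).hom ≫
    (α_ κ ι (κ ≫ ι)).inv ≫ x ▷ (κ ≫ ι) ≫ (κ ≫ ι) ◁ y ≫
    (α_ κ ι (κ ≫ ι)).hom ≫ κ ◁ (α_ ι κ ι).inv ≫ κ ◁ (D.evR ▷ ι) ≫ κ ◁ (λ_ ι).hom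

/-- The convolution unit `i_A = coev_L ∘ ev_R`. -/
def iA : ι ≫ κ ⟶ ι ≫ κ := D.evR ≫ D.coevL

/-- The convolution unit `i_B = coev_R ∘ ev_L`. -/
def iB : κ ≫ ι ⟶ κ ≫ ι := D.evL ≫ D.coevR

/-- The antipode `S_A = Ḟ⁻¹ ∘ F`. -/
def SA (x : ι ≫ κ ⟶ ι ≫ κ) : ι ≫ κ ⟶ ι ≫ κ := D.FdotInv (D.Ftr x)

/-- The inverse antipode `S_A⁻¹ = F⁻¹ ∘ Ḟ`. -/
def SAinv (x : ι ≫ κ ⟶ ι ≫ κ) : ι ≫ κ ⟶ ι ≫ κ := D.FtrInv (D.Fdot x)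

/-- The anti-isomorphism `ν : L → R^op` (conjugation with `evR`/`coevR`). -/
def nu (l : ι ⟶ ι) : κ ⟶ κ :=
  (λ_ κ).inv ≫ D.coevR ▷ κ ≫ (α_ κ ι κ).hom ≫ κ ◁ (l ▷ κ) ≫ κ ◁ D.evR ≫ (ρ_ κ).hom

/-- The anti-isomorphism `μ : L → R^op` (conjugation with `evL`/`coevL`). -/
def mu (l : ι ⟶ ι) : κ ⟶ κ :=
  (ρ_ κ).inv ≫ κ ◁ D.coevL ≫ (α_ κ ι κ).inv ≫ (κ ◁ l) ▷ κ ≫ D.evL ▷ κ ≫ (λ_ κ).hom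

/-- The Frobenius map `φ_L : A → L`. -/
def phiL (x : ι ≫ κ ⟶ ι ≫ κ) : ι ⟶ ι :=
  (ρ_ ι).inv ≫ ι ◁ D.coevR ≫ (α_ ι κ ι).inv ≫ x ▷ ι ≫ (α_ ι κ ι).hom ≫ ι ◁ D.evL ≫ (ρ_ ι).hom

/-- Source map of the left bialgebroid `s_L : L → A`, `l ↦ l × κ`. -/
def sL (_D : FrobeniusDuality ι κ) (l : ι ⟶ ι) : ι ≫ κ ⟶ ι ≫ κ := l ▷ κ

/-- Target map of the left bialgebroid `t_L : L → A`, `l ↦ ι × μ(l)`. -/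
def tL (l : ι ⟶ ι) : ι ≫ κ ⟶ ι ≫ κ := ι ◁ D.mu l

/-- Source map of the right bialgebroid `s_R : R → A`, `r ↦ ι × r`. -/
def sR (_D : FrobeniusDuality ι κ) (r : κ ⟶ κ) : ι ≫ κ ⟶ ι ≫ κ := ι ◁ r

/-- Target map of the right bialgebroid `t_R : R → A`, `r ↦ ν⁻¹(r) × κ`. -/
noncomputable def tR (r : κ ⟶ κ) : ι ≫ κ ⟶ ι ≫ κ :=
  (@Function.invFun (ι ⟶ ι) (κ ⟶ κ) ⟨𝟙 ι⟩ D.nu r) ▷ κ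

/-- The counit `π_L(a) = φ_L(a ∘ i_A)`. -/
def piL (x : ι ≫ κ ⟶ ι ≫ κ) : ι ⟶ ι := D.phiL (D.iA ≫ x)

/-- The counit `π_R(a) = ν(φ_L(S_A⁻¹(a) ∘ i_A))`. -/
def piR (x : ι ≫ κ ⟶ ι ≫ κ) : κ ⟶ κ := D.nu (D.phiL (D.iA ≫ D.SAinv x))

/-- The composite `(y × ι) ∘ α⁻¹ ∘ (ι × coevR) ∘ (ι × evL) ∘ α ∘ (x × ι)` appearing in
the depth-2 quasi-basis identity. -/
def d2comp (x y : ι ≫ κ ⟶ ι ≫ κ) : (ι ≫ κ) ≫ ι ⟶ (ι ≫ κ) ≫ ι :=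
  x ▷ ι ≫ (α_ ι κ ι).hom ≫ ι ◁ D.evL ≫ ι ◁ D.coevR ≫ (α_ ι κ ι).inv ≫ y ▷ ι



/-- Auxiliary: the endomorphism of `κ` obtained by closing up `y` with `coevR`/`evL`. -/
def psi (y : ι ≫ κ ⟶ ι ≫ κ) : κ ⟶ κ :=
  (λ_ κ).inv ≫ D.coevR ▷ κ ≫ (α_ κ ι κ).hom ≫ κ ◁ y ≫ (α_ κ ι κ).inv ≫
    D.evL ▷ κ ≫ (λ_ κ).hom

/-- Auxiliary: candidate inverse of `nu`. -/
def nuInv (r : κ ⟶ κ) : ι ⟶ ι :=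
  (ρ_ ι).inv ≫ ι ◁ D.coevR ≫ ι ◁ (r ▷ ι) ≫ (α_ ι κ ι).inv ≫ D.evR ▷ ι ≫ (λ_ ι).hom

lemma zig1' : D.coevL ▷ ι ≫ (α_ ι κ ι).hom ≫ ι ◁ D.evL ≫ (ρ_ ι).hom = (λ_ ι).hom := by
  rw [← cancel_epi (λ_ ι).inv]; simpa using D.zig1

lemma zig2' : κ ◁ D.coevL ≫ (α_ κ ι κ).inv ≫ D.evL ▷ κ ≫ (λ_ κ).hom = (ρ_ κ).hom := by
  rw [← cancel_epi (ρ_ κ).inv]; simpa using D.zig2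

lemma zig3l : (ρ_ ι).inv ≫ ι ◁ D.coevR ≫ (α_ ι κ ι).inv ≫ D.evR ▷ ι = (λ_ ι).inv := by
  rw [← cancel_mono (λ_ ι).hom]; simpa using D.zig3

lemma zig4l : (λ_ κ).inv ≫ D.coevR ▷ κ ≫ (α_ κ ι κ).hom ≫ κ ◁ D.evR = (ρ_ κ).inv := by
  rw [← cancel_mono (ρ_ κ).hom]; simpa using D.zig4

lemma conv_id_right (x : ι ≫ κ ⟶ ι ≫ κ) : D.conv x (𝟙 (ι ≫ κ)) = D.phiL x ▷ κ := by
  simp only [conv, phiL, Bicategory.whiskerLeft_id, Category.comp_id, Category.id_comp]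
  bicategory

lemma conv_id_left (y : ι ≫ κ ⟶ ι ≫ κ) : D.conv (𝟙 (ι ≫ κ)) y = ι ◁ D.psi y := by
  simp only [conv, psi, Bicategory.id_whiskerRight, Category.comp_id, Category.id_comp]
  bicategory

lemma phiL_iA (z : ι ≫ κ ⟶ ι ≫ κ) :
    D.phiL (D.iA ≫ z) =
      (λ_ ι).inv ≫ D.coevL ▷ ι ≫ z ▷ ι ≫ (α_ ι κ ι).hom ≫ ι ◁ D.evL ≫ (ρ_ ι).hom := by
  simp only [phiL, iA, comp_whiskerRight, Category.assoc]
  rw [reassoc_of% D.zig3l]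

lemma phiL_ziA (z : ι ≫ κ ⟶ ι ≫ κ) :
    D.phiL (z ≫ D.iA) =
      (ρ_ ι).inv ≫ ι ◁ D.coevR ≫ (α_ ι κ ι).inv ≫ z ▷ ι ≫ D.evR ▷ ι ≫ (λ_ ι).hom := by
  simp only [phiL, iA, comp_whiskerRight, Category.assoc]
  rw [D.zig1']

lemma psi_iA (z : ι ≫ κ ⟶ ι ≫ κ) :
    D.psi (D.iA ≫ z) =
      (ρ_ κ).inv ≫ κ ◁ D.coevL ≫ κ ◁ z ≫ (α_ κ ι κ).inv ≫ D.evL ▷ κ ≫ (λ_ κ).hom := by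
  simp only [psi, iA, Bicategory.whiskerLeft_comp, Category.assoc]
  rw [reassoc_of% D.zig4l]

lemma psi_ziA (z : ι ≫ κ ⟶ ι ≫ κ) :
    D.psi (z ≫ D.iA) =
      (λ_ κ).inv ≫ D.coevR ▷ κ ≫ (α_ κ ι κ).hom ≫ κ ◁ z ≫ κ ◁ D.evR ≫ (ρ_ κ).hom := by
  simp only [psi, iA, Bicategory.whiskerLeft_comp, Category.assoc]
  rw [D.zig2']

lemma mu_phiL_iA (z : ι ≫ κ ⟶ ι ≫ κ) :
    D.mu (D.phiL (D.iA ≫ z)) = D.psi (D.iA ≫ z) := by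
  rw [D.phiL_iA, D.psi_iA]
  simp only [mu]
  calc (ρ_ κ).inv ≫ κ ◁ D.coevL ≫ (α_ κ ι κ).inv ≫
        (κ ◁ ((λ_ ι).inv ≫ D.coevL ▷ ι ≫ z ▷ ι ≫ (α_ ι κ ι).hom ≫ ι ◁ D.evL ≫
          (ρ_ ι).hom)) ▷ κ ≫ D.evL ▷ κ ≫ (λ_ κ).hom
      = (ρ_ κ).inv ≫
        κ ◁ ((λ_ (𝟙 a)).inv ≫ (𝟙 a) ◁ D.coevL ≫ (D.coevL ≫ z) ▷ (ι ≫ κ)) ≫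
        κ ◁ ((α_ ι κ (ι ≫ κ)).hom ≫ ι ◁ (α_ κ ι κ).inv ≫ ι ◁ (D.evL ▷ κ) ≫
          ι ◁ (λ_ κ).hom) ≫
        (α_ κ ι κ).inv ≫ D.evL ▷ κ ≫ (λ_ κ).hom := by bicategory
    _ = (ρ_ κ).inv ≫
        κ ◁ ((λ_ (𝟙 a)).inv ≫ (D.coevL ≫ z) ▷ (𝟙 a) ≫ (ι ≫ κ) ◁ D.coevL) ≫
        κ ◁ ((α_ ι κ (ι ≫ κ)).hom ≫ ι ◁ (α_ κ ι κ).inv ≫ ι ◁ (D.evL ▷ κ) ≫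
          ι ◁ (λ_ κ).hom) ≫
        (α_ κ ι κ).inv ≫ D.evL ▷ κ ≫ (λ_ κ).hom := by
          rw [whisker_exchange (D.coevL ≫ z) D.coevL]
    _ = (ρ_ κ).inv ≫ κ ◁ (D.coevL ≫ z) ≫
        κ ◁ (ι ◁ ((ρ_ κ).inv ≫ κ ◁ D.coevL ≫ (α_ κ ι κ).inv ≫ D.evL ▷ κ ≫
          (λ_ κ).hom)) ≫
        (α_ κ ι κ).inv ≫ D.evL ▷ κ ≫ (λ_ κ).hom := by bicategory
    _ = (ρ_ κ).inv ≫ κ ◁ D.coevL ≫ κ ◁ z ≫ (α_ κ ι κ).inv ≫ D.evL ▷ κ ≫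
        (λ_ κ).hom := by rw [D.zig2]; bicategory

lemma nu_phiL_ziA (z : ι ≫ κ ⟶ ι ≫ κ) :
    D.nu (D.phiL (z ≫ D.iA)) = D.psi (z ≫ D.iA) := by
  rw [D.phiL_ziA, D.psi_ziA]
  simp only [nu]
  calc (λ_ κ).inv ≫ D.coevR ▷ κ ≫ (α_ κ ι κ).hom ≫
        κ ◁ (((ρ_ ι).inv ≫ ι ◁ D.coevR ≫ (α_ ι κ ι).inv ≫ z ▷ ι ≫ D.evR ▷ ι ≫
          (λ_ ι).hom) ▷ κ) ≫ κ ◁ D.evR ≫ (ρ_ κ).hom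
      = (λ_ κ).inv ≫ D.coevR ▷ κ ≫ (α_ κ ι κ).hom ≫
        κ ◁ (((ρ_ ι).inv ≫ ι ◁ D.coevR) ▷ κ ≫ (α_ ι (κ ≫ ι) κ).hom ≫
          ι ◁ (α_ κ ι κ).hom ≫ (α_ ι κ (ι ≫ κ)).inv ≫
          (z ≫ D.evR) ▷ (ι ≫ κ) ≫ (𝟙 a) ◁ D.evR ≫ (λ_ (𝟙 a)).hom) ≫
        (ρ_ κ).hom := by bicategory
    _ = (λ_ κ).inv ≫ D.coevR ▷ κ ≫ (α_ κ ι κ).hom ≫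
        κ ◁ (((ρ_ ι).inv ≫ ι ◁ D.coevR) ▷ κ ≫ (α_ ι (κ ≫ ι) κ).hom ≫
          ι ◁ (α_ κ ι κ).hom ≫ (α_ ι κ (ι ≫ κ)).inv ≫
          (ι ≫ κ) ◁ D.evR ≫ (z ≫ D.evR) ▷ (𝟙 a) ≫ (λ_ (𝟙 a)).hom) ≫
        (ρ_ κ).hom := by rw [← reassoc_of% (whisker_exchange (z ≫ D.evR) D.evR)]
    _ = (λ_ κ).inv ≫ D.coevR ▷ κ ≫ (α_ κ ι κ).hom ≫
        κ ◁ (ι ◁ ((λ_ κ).inv ≫ D.coevR ▷ κ ≫ (α_ κ ι κ).hom ≫ κ ◁ D.evR ≫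
          (ρ_ κ).hom)) ≫ κ ◁ (z ≫ D.evR) ≫ (ρ_ κ).hom := by bicategory
    _ = (λ_ κ).inv ≫ D.coevR ▷ κ ≫ (α_ κ ι κ).hom ≫ κ ◁ z ≫ κ ◁ D.evR ≫
        (ρ_ κ).hom := by rw [D.zig4]; bicategory

lemma phiL_iA_FtrInv (y : κ ≫ ι ⟶ κ ≫ ι) :
    D.phiL (D.iA ≫ D.FtrInv y) =
      (λ_ ι).inv ≫ D.coevL ▷ ι ≫ (α_ ι κ ι).hom ≫ ι ◁ y ≫ (α_ ι κ ι).inv ≫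
        D.evR ▷ ι ≫ (λ_ ι).hom := by
  rw [D.phiL_iA]
  simp only [FtrInv]
  calc (λ_ ι).inv ≫ D.coevL ▷ ι ≫
        ((ρ_ (ι ≫ κ)).inv ≫ (ι ≫ κ) ◁ D.coevL ≫ (α_ ι κ (ι ≫ κ)).hom ≫
          ι ◁ ((α_ κ ι κ).inv ≫ y ▷ κ ≫ (α_ κ ι κ).hom) ≫
          (α_ ι κ (ι ≫ κ)).inv ≫ D.evR ▷ (ι ≫ κ) ≫ (λ_ (ι ≫ κ)).hom) ▷ ι ≫
        (α_ ι κ ι).hom ≫ ι ◁ D.evL ≫ (ρ_ ι).hom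
      = (λ_ ι).inv ≫ D.coevL ▷ ι ≫
        ((ρ_ (ι ≫ κ)).inv ≫ (ι ≫ κ) ◁ D.coevL) ▷ ι ≫
        (α_ (ι ≫ κ) (ι ≫ κ) ι).hom ≫ (ι ≫ κ) ◁ (α_ ι κ ι).hom ≫
        (α_ (ι ≫ κ) ι (κ ≫ ι)).inv ≫
        ((α_ ι κ ι).hom ≫ ι ◁ y ≫ (α_ ι κ ι).inv ≫ D.evR ▷ ι ≫ (λ_ ι).hom) ▷
          (κ ≫ ι) ≫ ι ◁ D.evL ≫ (ρ_ ι).hom := by bicategory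
    _ = (λ_ ι).inv ≫ D.coevL ▷ ι ≫
        ((ρ_ (ι ≫ κ)).inv ≫ (ι ≫ κ) ◁ D.coevL) ▷ ι ≫
        (α_ (ι ≫ κ) (ι ≫ κ) ι).hom ≫ (ι ≫ κ) ◁ (α_ ι κ ι).hom ≫
        (α_ (ι ≫ κ) ι (κ ≫ ι)).inv ≫
        ((ι ≫ κ) ≫ ι) ◁ D.evL ≫
        ((α_ ι κ ι).hom ≫ ι ◁ y ≫ (α_ ι κ ι).inv ≫ D.evR ▷ ι ≫ (λ_ ι).hom) ▷
          (𝟙 b) ≫ (ρ_ ι).hom := by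
          rw [← reassoc_of% (whisker_exchange
            ((α_ ι κ ι).hom ≫ ι ◁ y ≫ (α_ ι κ ι).inv ≫ D.evR ▷ ι ≫ (λ_ ι).hom)
            D.evL)]
    _ = (λ_ ι).inv ≫ D.coevL ▷ ι ≫
        (ι ≫ κ) ◁ ((λ_ ι).inv ≫ D.coevL ▷ ι ≫ (α_ ι κ ι).hom ≫ ι ◁ D.evL ≫
          (ρ_ ι).hom) ≫
        (α_ ι κ ι).hom ≫ ι ◁ y ≫ (α_ ι κ ι).inv ≫ D.evR ▷ ι ≫ (λ_ ι).hom := by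
          bicategory
    _ = (λ_ ι).inv ≫ D.coevL ▷ ι ≫ (α_ ι κ ι).hom ≫ ι ◁ y ≫ (α_ ι κ ι).inv ≫
        D.evR ▷ ι ≫ (λ_ ι).hom := by rw [D.zig1]; bicategory

lemma H_Fdot (z : ι ≫ κ ⟶ ι ≫ κ) :
    (λ_ ι).inv ≫ D.coevL ▷ ι ≫ (α_ ι κ ι).hom ≫ ι ◁ (D.Fdot z) ≫ (α_ ι κ ι).inv ≫
      D.evR ▷ ι ≫ (λ_ ι).hom =
    (ρ_ ι).inv ≫ ι ◁ D.coevR ≫ (α_ ι κ ι).inv ≫ z ▷ ι ≫ D.evR ▷ ι ≫ (λ_ ι).hom := by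
  simp only [Fdot]
  calc (λ_ ι).inv ≫ D.coevL ▷ ι ≫ (α_ ι κ ι).hom ≫
        ι ◁ ((ρ_ (κ ≫ ι)).inv ≫ (κ ≫ ι) ◁ D.coevR ≫ (α_ κ ι (κ ≫ ι)).hom ≫
          κ ◁ ((α_ ι κ ι).inv ≫ z ▷ ι ≫ (α_ ι κ ι).hom) ≫
          (α_ κ ι (κ ≫ ι)).inv ≫ D.evL ▷ (κ ≫ ι) ≫ (λ_ (κ ≫ ι)).hom) ≫
        (α_ ι κ ι).inv ≫ D.evR ▷ ι ≫ (λ_ ι).hom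
      = (λ_ ι).inv ≫
        (D.coevL ▷ ι ≫
          (ι ≫ κ) ◁ ((ρ_ ι).inv ≫ ι ◁ D.coevR ≫ (α_ ι κ ι).inv ≫ z ▷ ι)) ≫
        (ι ≫ κ) ◁ (α_ ι κ ι).hom ≫ (α_ ι κ (ι ≫ (κ ≫ ι))).hom ≫
        ι ◁ (α_ κ ι (κ ≫ ι)).inv ≫ ι ◁ (D.evL ▷ (κ ≫ ι)) ≫
        ι ◁ (λ_ (κ ≫ ι)).hom ≫ (α_ ι κ ι).inv ≫ D.evR ▷ ι ≫ (λ_ ι).hom := by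
          bicategory
    _ = (λ_ ι).inv ≫
        ((𝟙 a) ◁ ((ρ_ ι).inv ≫ ι ◁ D.coevR ≫ (α_ ι κ ι).inv ≫ z ▷ ι) ≫
          D.coevL ▷ ((ι ≫ κ) ≫ ι)) ≫
        (ι ≫ κ) ◁ (α_ ι κ ι).hom ≫ (α_ ι κ (ι ≫ (κ ≫ ι))).hom ≫
        ι ◁ (α_ κ ι (κ ≫ ι)).inv ≫ ι ◁ (D.evL ▷ (κ ≫ ι)) ≫
        ι ◁ (λ_ (κ ≫ ι)).hom ≫ (α_ ι κ ι).inv ≫ D.evR ▷ ι ≫ (λ_ ι).hom := by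
          rw [← whisker_exchange D.coevL
            ((ρ_ ι).inv ≫ ι ◁ D.coevR ≫ (α_ ι κ ι).inv ≫ z ▷ ι)]
    _ = (ρ_ ι).inv ≫ ι ◁ D.coevR ≫ (α_ ι κ ι).inv ≫ z ▷ ι ≫
        (((λ_ ι).inv ≫ D.coevL ▷ ι ≫ (α_ ι κ ι).hom ≫ ι ◁ D.evL ≫
          (ρ_ ι).hom) ▷ κ) ▷ ι ≫ D.evR ▷ ι ≫ (λ_ ι).hom := by bicategory
    _ = (ρ_ ι).inv ≫ ι ◁ D.coevR ≫ (α_ ι κ ι).inv ≫ z ▷ ι ≫ D.evR ▷ ι ≫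
        (λ_ ι).hom := by rw [D.zig1]; bicategory

lemma phiL_iA_SAinv (z : ι ≫ κ ⟶ ι ≫ κ) :
    D.phiL (D.iA ≫ D.SAinv z) = D.phiL (z ≫ D.iA) := by
  simp only [SAinv]
  rw [D.phiL_iA_FtrInv, D.H_Fdot, D.phiL_ziA]

lemma nuInv_nu (l : ι ⟶ ι) : D.nuInv (D.nu l) = l := by
  simp only [nuInv, nu]
  calc (ρ_ ι).inv ≫ ι ◁ D.coevR ≫
        ι ◁ (((λ_ κ).inv ≫ D.coevR ▷ κ ≫ (α_ κ ι κ).hom ≫ κ ◁ (l ▷ κ) ≫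
          κ ◁ D.evR ≫ (ρ_ κ).hom) ▷ ι) ≫
        (α_ ι κ ι).inv ≫ D.evR ▷ ι ≫ (λ_ ι).hom
      = (ρ_ ι).inv ≫
        ι ◁ ((ρ_ (𝟙 b)).inv ≫
          ((𝟙 b) ◁ D.coevR ≫ (D.coevR ≫ κ ◁ l) ▷ (κ ≫ ι))) ≫
        ι ◁ ((α_ κ ι (κ ≫ ι)).hom ≫ κ ◁ (α_ ι κ ι).inv ≫ κ ◁ (D.evR ▷ ι) ≫
          κ ◁ (λ_ ι).hom) ≫
        (α_ ι κ ι).inv ≫ D.evR ▷ ι ≫ (λ_ ι).hom := by bicategory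
    _ = (ρ_ ι).inv ≫
        ι ◁ ((ρ_ (𝟙 b)).inv ≫
          ((D.coevR ≫ κ ◁ l) ▷ (𝟙 b) ≫ (κ ≫ ι) ◁ D.coevR)) ≫
        ι ◁ ((α_ κ ι (κ ≫ ι)).hom ≫ κ ◁ (α_ ι κ ι).inv ≫ κ ◁ (D.evR ▷ ι) ≫
          κ ◁ (λ_ ι).hom) ≫
        (α_ ι κ ι).inv ≫ D.evR ▷ ι ≫ (λ_ ι).hom := by
          rw [whisker_exchange (D.coevR ≫ κ ◁ l) D.coevR]
    _ = (ρ_ ι).inv ≫ ι ◁ (D.coevR ≫ κ ◁ l) ≫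
        ι ◁ (κ ◁ ((ρ_ ι).inv ≫ ι ◁ D.coevR ≫ (α_ ι κ ι).inv ≫ D.evR ▷ ι ≫
          (λ_ ι).hom)) ≫
        (α_ ι κ ι).inv ≫ D.evR ▷ ι ≫ (λ_ ι).hom := by bicategory
    _ = (ρ_ ι).inv ≫ ι ◁ D.coevR ≫ (α_ ι κ ι).inv ≫
        ((ι ≫ κ) ◁ l ≫ D.evR ▷ ι) ≫ (λ_ ι).hom := by rw [D.zig3]; bicategory
    _ = ((ρ_ ι).inv ≫ ι ◁ D.coevR ≫ (α_ ι κ ι).inv ≫ D.evR ▷ ι ≫ (λ_ ι).hom) ≫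
        l := by rw [whisker_exchange D.evR l]; bicategory
    _ = l := by rw [D.zig3, Category.id_comp]

lemma nu_injective : Function.Injective D.nu := fun l₁ l₂ h => by
  have h2 := congrArg D.nuInv h
  rwa [D.nuInv_nu, D.nuInv_nu] at h2

lemma invFun_nu (l : ι ⟶ ι) :
    (@Function.invFun (ι ⟶ ι) (κ ⟶ κ) ⟨𝟙 ι⟩ D.nu) (D.nu l) = l :=
  D.nu_injective (@Function.invFun_eq _ _ ⟨𝟙 ι⟩ _ _ ⟨l, rfl⟩)

end FrobeniusDuality


open FrobeniusDuality in
/-- In the Hopf algebroid `A = C²(ι×κ,ι×κ)` of a D2 Frobenius 1-morphism,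
with `i_A = coevL ∘ evR`: (i) `(a∘i_A) ∗ 1 = s_L(π_L(a))`; (ii) `1 ∗ (a∘i_A) = t_L(π_L(a))`;
(iii) `1 ∗ (i_A∘a) = s_R(π_R(a))`; (iv) `(i_A∘a) ∗ 1 = t_R(π_R(a))`.
(Vertical composition `u ∘ v` of the paper is `v ≫ u` here.) -/
theorem counit_convolution_identities
    {C : Type u} [Bicategory.{w, v} C] [∀ (x y : C), Preadditive (x ⟶ y)]
    (wl : ∀ {x y z : C} (f : x ⟶ y) {g h : y ⟶ z} (η θ : g ⟶ h),
      f ◁ (η + θ) = f ◁ η + f ◁ θ)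
    (wr : ∀ {x y z : C} {f g : x ⟶ y} (η θ : f ⟶ g) (h : y ⟶ z),
      (η + θ) ▷ h = η ▷ h + θ ▷ h)
    {a b : C} {ι : a ⟶ b} {κ : b ⟶ a} (D : FrobeniusDuality ι κ)
    (n : ℕ) (y x : ℕ → (ι ≫ κ ⟶ ι ≫ κ))
    (hqb : ∑ i ∈ Finset.range n, D.d2comp (x i) (y i) = 𝟙 ((ι ≫ κ) ≫ ι)) :
    (∀ z : ι ≫ κ ⟶ ι ≫ κ, D.conv (D.iA ≫ z) (𝟙 (ι ≫ κ)) = D.sL (D.piL z)) ∧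
    (∀ z : ι ≫ κ ⟶ ι ≫ κ, D.conv (𝟙 (ι ≫ κ)) (D.iA ≫ z) = D.tL (D.piL z)) ∧
    (∀ z : ι ≫ κ ⟶ ι ≫ κ, D.conv (𝟙 (ι ≫ κ)) (z ≫ D.iA) = D.sR (D.piR z)) ∧
    (∀ z : ι ≫ κ ⟶ ι ≫ κ, D.conv (z ≫ D.iA) (𝟙 (ι ≫ κ)) = D.tR (D.piR z)) := by
  refine ⟨fun z => ?_, fun z => ?_, fun z => ?_, fun z => ?_⟩
  · rw [D.conv_id_right]; rfl
  · rw [D.conv_id_left]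
    simp only [tL, piL]
    rw [D.mu_phiL_iA]
  · rw [D.conv_id_left]
    simp only [sR, piR]
    rw [D.phiL_iA_SAinv, D.nu_phiL_ziA]
  · rw [D.conv_id_right]
    simp only [tR, piR]
    rw [D.phiL_iA_SAinv, D.invFun_nu]
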